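/- Let T: 𝕋 → 𝕋 be continuous such that for a partition 0 = x₀ < x₁ < ⋯ < x_d = 1, T is monotone increasing on each [x_k, x_{k+1}), T(x_k) = 0, and T(x) → 1 as x → x_{k+1}⁻. Let ι: 𝕋 → {0,…,d−1}^ℕ be the itinerary map, ι(x)_n = k iff Tⁿ(x) ∈ [x_k, x_{k+1}). If I ∈ {0,…,d−1}^ℕ does not terminate in an infinite string of (d−1)'s, then there exists x ∈ [0,1) with ι(x) = I. -/

import Mathlib

open Set Filter MeasureTheory

noncomputable def rep (z : UnitAddCircle) : ℝ := (AddCircle.equivIco 1 0 z : ℝ)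

def MinimalOn (T : UnitAddCircle → UnitAddCircle) (X : Set UnitAddCircle) : Prop :=
  ∀ x ∈ X, ∀ y ∈ X, y ∈ closure {z : UnitAddCircle | ∃ n : ℕ, T^[n] x = z}

def PreservesCyclicOrder (T : UnitAddCircle → UnitAddCircle) (X : Set UnitAddCircle) : Prop :=
  ∀ p ∈ X, ∀ q ∈ X, ∀ r ∈ X,
    T p ≠ T q → T q ≠ T r → T r ≠ T p →
    sbtw p q r → sbtw (T p) (T q) (T r)

def IsRotational (T : UnitAddCircle → UnitAddCircle) (X : Set UnitAddCircle) : Prop :=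
  IsClosed X ∧ Set.MapsTo T X X ∧ MinimalOn T X ∧ PreservesCyclicOrder T X

open Topology in
section

lemma rep_mem (z : UnitAddCircle) : rep z ∈ Ico (0:ℝ) 1 := by
  have h := (AddCircle.equivIco 1 0 z).2
  simpa [rep] using h

lemma coe_rep (z : UnitAddCircle) : ((rep z : ℝ) : UnitAddCircle) = z :=
  (AddCircle.equivIco 1 0).symm_apply_apply z

lemma rep_coe {r : ℝ} (h : r ∈ Ico (0:ℝ) 1) : rep ((r : ℝ) : UnitAddCircle) = r := by
  have h1 : rep ((r : ℝ) : UnitAddCircle) ∈ Ico (0:ℝ) (0+1) := by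
    rw [zero_add]; exact rep_mem _
  have h2 : r ∈ Ico (0:ℝ) (0+1) := by rwa [zero_add]
  exact (AddCircle.coe_eq_coe_iff_of_mem_Ico h1 h2).mp (coe_rep _)

lemma rep_zero : rep 0 = 0 := by
  have h : ((0:ℝ) : UnitAddCircle) = 0 := by norm_num
  rw [← h, rep_coe (by constructor <;> norm_num)]

lemma circle_key {f : ℝ → ℝ} {T : UnitAddCircle → UnitAddCircle} (hTc : Continuous T)
    (hcirc : ∀ r : ℝ, ((f r : ℝ) : UnitAddCircle) = T ((r:ℝ):UnitAddCircle))
    (hfmem : ∀ r, f r ∈ Ico (0:ℝ) 1)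
    {L r₀ : ℝ} {l : Filter ℝ} [l.NeBot] (hl : l ≤ nhds r₀)
    (hL : L ∈ Ico (0:ℝ) 1) (hten : Tendsto f l (nhds L)) : L = f r₀ := by
  have hcoe : Continuous (fun s : ℝ => ((s:ℝ) : UnitAddCircle)) := AddCircle.continuous_mk' 1
  have h1 : Tendsto (fun r => ((f r :ℝ) : UnitAddCircle)) l (nhds ((L:ℝ):UnitAddCircle)) :=
    (hcoe.tendsto L).comp hten
  have h2 : Tendsto (fun r : ℝ => T ((r:ℝ):UnitAddCircle)) l (nhds (T ((r₀:ℝ):UnitAddCircle))) :=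
    (((hTc.comp hcoe).tendsto r₀)).mono_left hl
  rw [funext hcirc] at h1
  have h4 : ((L:ℝ) : UnitAddCircle) = T ((r₀:ℝ):UnitAddCircle) := tendsto_nhds_unique h1 h2
  rw [← hcirc r₀] at h4
  have hL' : L ∈ Ico (0:ℝ) (0+1) := by simpa using hL
  have hf' : f r₀ ∈ Ico (0:ℝ) (0+1) := by simpa using hfmem r₀
  exact (AddCircle.coe_eq_coe_iff_of_mem_Ico hL' hf').mp h4

lemma contF {f : ℝ → ℝ} {T : UnitAddCircle → UnitAddCircle} (hTc : Continuous T)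
    (hcirc : ∀ r : ℝ, ((f r : ℝ) : UnitAddCircle) = T ((r:ℝ):UnitAddCircle))
    (hfmem : ∀ r, f r ∈ Ico (0:ℝ) 1)
    {u v : ℝ} (hmono : MonotoneOn f (Ico u v)) : ContinuousOn f (Ico u v) := by
  intro r₀ hr₀
  have h1 : Ico u v = Ico u r₀ ∪ Ico r₀ v := (Ico_union_Ico_eq_Ico hr₀.1 hr₀.2.le).symm
  rw [h1]
  apply ContinuousWithinAt.union
  · rcases eq_or_lt_of_le hr₀.1 with heq | hlt
    · rw [← heq, Ico_self]
      unfold ContinuousWithinAt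
      rw [nhdsWithin_empty]
      exact tendsto_bot
    · have hne : (Ioo u r₀).Nonempty := nonempty_Ioo.mpr hlt
      have hsub : Ioo u r₀ ⊆ Ico u v := fun s hs => ⟨hs.1.le, hs.2.trans hr₀.2⟩
      have hm' : MonotoneOn f (Ioo u r₀) := hmono.mono hsub
      have hub : ∀ y ∈ f '' Ioo u r₀, y ≤ f r₀ := by
        rintro y ⟨s, hs, rfl⟩
        exact hmono (hsub hs) hr₀ hs.2.le
      have hbdd : BddAbove (f '' Ioo u r₀) := ⟨f r₀, hub⟩
      have hlim := hm'.tendsto_nhdsWithin_Ioo_left hne hbdd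
      have hLmem : sSup (f '' Ioo u r₀) ∈ Ico (0:ℝ) 1 := by
        obtain ⟨s, hs⟩ := hne
        constructor
        · exact le_trans (hfmem s).1 (le_csSup hbdd ⟨s, hs, rfl⟩)
        · exact lt_of_le_of_lt (csSup_le ⟨f s, ⟨s, hs, rfl⟩⟩ hub) (hfmem r₀).2
      have hkey := circle_key hTc hcirc hfmem
        (nhdsWithin_le_nhds : nhdsWithin r₀ (Iio r₀) ≤ nhds r₀) hLmem hlim
      rw [hkey] at hlim
      exact hlim.mono_left (nhdsWithin_mono r₀ Ico_subset_Iio_self)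
  · have h2 : Ico r₀ v = insert r₀ (Ioo r₀ v) := (Ioo_insert_left hr₀.2).symm
    rw [h2, continuousWithinAt_insert_self]
    have hne : (Ioo r₀ v).Nonempty := nonempty_Ioo.mpr hr₀.2
    have hsub : Ioo r₀ v ⊆ Ico u v := fun s hs => ⟨hr₀.1.trans hs.1.le, hs.2⟩
    have hm' : MonotoneOn f (Ioo r₀ v) := hmono.mono hsub
    have hlb : ∀ y ∈ f '' Ioo r₀ v, f r₀ ≤ y := by
      rintro y ⟨s, hs, rfl⟩
      exact hmono hr₀ (hsub hs) hs.1.le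
    have hbdd : BddBelow (f '' Ioo r₀ v) := ⟨f r₀, hlb⟩
    have hlim := hm'.tendsto_nhdsWithin_Ioo_right hne hbdd
    have hLmem : sInf (f '' Ioo r₀ v) ∈ Ico (0:ℝ) 1 := by
      obtain ⟨s, hs⟩ := hne
      constructor
      · exact le_trans (hfmem r₀).1 (le_csInf ⟨f s, ⟨s, hs, rfl⟩⟩ hlb)
      · exact lt_of_le_of_lt (csInf_le hbdd ⟨s, hs, rfl⟩) (hfmem s).2
    have hkey := circle_key hTc hcirc hfmem
      (nhdsWithin_le_nhds : nhdsWithin r₀ (Ioi r₀) ≤ nhds r₀) hLmem hlim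
    rw [hkey] at hlim
    exact hlim.mono_left (nhdsWithin_mono r₀ Ioo_subset_Ioi_self)
def CylInv (J : ℕ → Set ℝ) (f : ℝ → ℝ) (n : ℕ) (a b : ℝ) : Prop :=
  0 ≤ a ∧ a < b ∧ b ≤ 1 ∧ MonotoneOn (f^[n]) (Set.Ico a b) ∧
  (∀ r ∈ Set.Ico a b, f^[n] r ∈ Set.Ico (0:ℝ) 1) ∧ f^[n] a = 0 ∧
  ContinuousOn (f^[n]) (Set.Ico a b) ∧ Tendsto (f^[n]) (nhdsWithin b (Set.Iio b)) (nhds 1) ∧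
  (∀ r ∈ Set.Ico a b, ∀ m < n, f^[m] r ∈ J m)

lemma step_lemma {f : ℝ → ℝ} {J : ℕ → Set ℝ} {n : ℕ} {a b u v : ℝ}
    (hfmem : ∀ r, f r ∈ Ico (0:ℝ) 1)
    (hmono : MonotoneOn f (Ico u v)) (hcont : ContinuousOn f (Ico u v))
    (hf0 : f u = 0) (hf1 : Tendsto f (nhdsWithin v (Iio v)) (nhds 1))
    (h0u : 0 ≤ u) (huv : u < v) (hv1 : v ≤ 1)
    (hJ : J n = Ico u v)
    (h : CylInv J f n a b) :
    ∃ p : ℝ × ℝ, (CylInv J f (n+1) p.1 p.2 ∧ a ≤ p.1 ∧ p.1 < p.2 ∧ p.2 ≤ b) ∧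
      (v < 1 → p.2 < b) := by
  obtain ⟨h0a, hab, hb1, hmon, hmap, ha0, hcontn, htend, hitin⟩ := h
  -- surjectivity of f^[n] from [a,b) onto [0,1)
  have hsurj : ∀ y, 0 ≤ y → y < 1 → ∃ r, r ∈ Ico a b ∧ f^[n] r = y := by
    intro y hy0 hy1
    rcases eq_or_lt_of_le hy0 with h0 | h0
    · exact ⟨a, ⟨le_refl a, hab⟩, by rw [ha0, h0]⟩
    · have hev1 : ∀ᶠ r in nhdsWithin b (Iio b), y < f^[n] r :=
        htend.eventually (eventually_gt_nhds hy1)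
      have hev2 : ∀ᶠ r in nhdsWithin b (Iio b), r ∈ Ioo a b := Ioo_mem_nhdsLT hab
      obtain ⟨r', hr'y, hr'mem⟩ := (hev1.and hev2).exists
      have hy' : y ∈ Icc (f^[n] a) (f^[n] r') := ⟨by rw [ha0]; exact hy0, hr'y.le⟩
      have hIcc : Icc a r' ⊆ Ico a b := Icc_subset_Ico_right hr'mem.2
      obtain ⟨s, hs, hfs⟩ := intermediate_value_Icc hr'mem.1.le (hcontn.mono hIcc) hy'
      exact ⟨s, hIcc hs, hfs⟩
  -- least preimage of a value
  have hinf : ∀ w, 0 ≤ w → w < 1 →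
      ∃ e, e ∈ Ico a b ∧ f^[n] e = w ∧ (∀ r ∈ Ico a b, r < e → f^[n] r < w) ∧ a ≤ e := by
    intro w hw0 hw1
    obtain ⟨r₁, hr₁, hfr₁⟩ := hsurj w hw0 hw1
    set S := {r | r ∈ Ico a b ∧ w ≤ f^[n] r} with hS
    have hne : S.Nonempty := ⟨r₁, hr₁, hfr₁.ge⟩
    have hbddS : BddBelow S := ⟨a, fun r hr => hr.1.1⟩
    have hea : a ≤ sInf S := le_csInf hne fun r hr => hr.1.1
    have her₁ : sInf S ≤ r₁ := csInf_le hbddS ⟨hr₁, hfr₁.ge⟩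
    have hemem : sInf S ∈ Ico a b := ⟨hea, lt_of_le_of_lt her₁ hr₁.2⟩
    have hle : f^[n] (sInf S) ≤ w := hfr₁ ▸ hmon hemem hr₁ her₁
    have hge : w ≤ f^[n] (sInf S) := by
      by_contra hlt
      push_neg at hlt
      have hcw : ContinuousWithinAt (f^[n]) (Ico a b) (sInf S) := hcontn _ hemem
      have hmem2 : {r | f^[n] r < w} ∈ nhdsWithin (sInf S) (Ico a b) := hcw (Iio_mem_nhds hlt)
      rw [Metric.mem_nhdsWithin_iff] at hmem2
      obtain ⟨ε, hε, hball⟩ := hmem2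
      obtain ⟨r, hrS, hrlt⟩ := exists_lt_of_csInf_lt hne (by linarith : sInf S < sInf S + ε)
      have hre : sInf S ≤ r := csInf_le hbddS hrS
      have hrball : r ∈ Metric.ball (sInf S) ε := by
        rw [Metric.mem_ball, Real.dist_eq, abs_of_nonneg (by linarith)]
        linarith
      exact absurd hrS.2 (not_le.mpr (hball ⟨hrball, hrS.1⟩))
    refine ⟨sInf S, hemem, le_antisymm hle hge, ?_, hea⟩
    intro r hr hrlt
    by_contra hc
    push_neg at hc
    exact absurd (csInf_le hbddS ⟨hr, hc⟩) (not_le.mpr hrlt)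
  obtain ⟨α, hαmem, hαval, hαkey, hαa⟩ := hinf u h0u (lt_of_lt_of_le huv hv1)
  obtain ⟨β, hαβ, hβb, hdrop, hmem2, htendβ⟩ :
      ∃ β, α < β ∧ β ≤ b ∧ (v < 1 → β < b) ∧ (∀ r ∈ Ico α β, f^[n] r ∈ Ico u v) ∧
        Tendsto (f^[n]) (nhdsWithin β (Iio β)) (nhds v) := by
    rcases lt_or_eq_of_le hv1 with hvlt | hveq
    · obtain ⟨β, hβmem, hβval, hβkey, _⟩ := hinf v (h0u.trans huv.le) hvlt
      have hαβ : α < β := by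
        by_contra hc
        push_neg at hc
        have := hmon hβmem hαmem hc
        rw [hαval, hβval] at this
        exact absurd this (not_le.mpr huv)
      refine ⟨β, hαβ, hβmem.2.le, fun _ => hβmem.2, ?_, ?_⟩
      · intro r hr
        have hrab : r ∈ Ico a b := ⟨hαa.trans hr.1, hr.2.trans hβmem.2⟩
        refine ⟨?_, hβkey r hrab hr.2⟩
        have := hmon hαmem hrab hr.1
        rwa [hαval] at this
      · have hIooSub : Ioo α β ⊆ Ico a b := fun r hr => ⟨hαa.trans hr.1.le, hr.2.trans hβmem.2⟩
        have h2 : ContinuousWithinAt (f^[n]) (Ioo α β) β := (hcontn β hβmem).mono hIooSub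
        have h3 : Tendsto (f^[n]) (nhdsWithin β (Ioo α β)) (nhds (f^[n] β)) := h2
        rw [nhdsWithin_Ioo_eq_nhdsLT hαβ, hβval] at h3
        exact h3
    · refine ⟨b, hαmem.2, le_refl b, fun hcon => absurd hveq (ne_of_lt hcon), ?_, ?_⟩
      · intro r hr
        have hrab : r ∈ Ico a b := ⟨hαa.trans hr.1, hr.2⟩
        refine ⟨?_, hveq ▸ (hmap r hrab).2⟩
        have := hmon hαmem hrab hr.1
        rwa [hαval] at this
      · rw [hveq]; exact htend
  have hsub : Ico α β ⊆ Ico a b := fun r hr => ⟨hαa.trans hr.1, lt_of_lt_of_le hr.2 hβb⟩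
  refine ⟨(α, β), ⟨⟨h0a.trans hαa, hαβ, hβb.trans hb1, ?_, ?_, ?_, ?_, ?_, ?_⟩,
    hαa, hαβ, hβb⟩, hdrop⟩
  · -- MonotoneOn f^[n+1]
    intro r hr s hs hrs
    rw [Function.iterate_succ_apply', Function.iterate_succ_apply']
    exact hmono (hmem2 r hr) (hmem2 s hs) (hmon (hsub hr) (hsub hs) hrs)
  · intro r _
    rw [Function.iterate_succ_apply']
    exact hfmem _
  · rw [Function.iterate_succ_apply', hαval, hf0]
  · rw [Function.iterate_succ']
    exact hcont.comp (hcontn.mono hsub) (fun r hr => hmem2 r hr)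
  · have hev : ∀ᶠ r in nhdsWithin β (Iio β), f^[n] r ∈ Iio v := by
      filter_upwards [Ioo_mem_nhdsLT hαβ] with r hr
      exact (hmem2 r ⟨hr.1.le, hr.2⟩).2
    have h3 : Tendsto (f^[n]) (nhdsWithin β (Iio β)) (nhdsWithin v (Iio v)) :=
      tendsto_nhdsWithin_iff.mpr ⟨htendβ, hev⟩
    have h4 := hf1.comp h3
    rw [Function.iterate_succ']
    exact h4
  · intro r hr m hm
    rcases Nat.lt_succ_iff_lt_or_eq.mp hm with hmn | hmn
    · exact hitin r (hsub hr) m hmn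
    · subst hmn
      rw [hJ]
      exact hmem2 r hr
lemma iter_eq (T : UnitAddCircle → UnitAddCircle) (n : ℕ) {r : ℝ} (hr : r ∈ Ico (0:ℝ) 1) :
    rep (T^[n] ((r:ℝ):UnitAddCircle)) = (fun s : ℝ => rep (T ((s:ℝ):UnitAddCircle)))^[n] r := by
  induction n with
  | zero => simpa using rep_coe hr
  | succ n ih =>
    conv_lhs => rw [Function.iterate_succ_apply', ← coe_rep (T^[n] ((r:ℝ):UnitAddCircle))]
    rw [Function.iterate_succ_apply', ih]

end

theorem itinerary_realization
    (d : ℕ) (hd : 0 < d)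
    (x : Fin (d + 1) → ℝ) (hxmono : StrictMono x)
    (hx0 : x 0 = 0) (hx1 : x (Fin.last d) = 1)
    (T : UnitAddCircle → UnitAddCircle) (hT : Continuous T)
    (hTmono : ∀ k : Fin d, ∀ r s : ℝ,
        r ∈ Set.Ico (x k.castSucc) (x k.succ) → s ∈ Set.Ico (x k.castSucc) (x k.succ) →
        r ≤ s → rep (T ((r : ℝ) : UnitAddCircle)) ≤ rep (T ((s : ℝ) : UnitAddCircle)))
    (hT0 : ∀ k : Fin d, T ((x k.castSucc : ℝ) : UnitAddCircle) = 0)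
    (hT1 : ∀ k : Fin d, Tendsto (fun r : ℝ => rep (T ((r : ℝ) : UnitAddCircle)))
        (nhdsWithin (x k.succ) (Set.Iio (x k.succ))) (nhds 1))
    (ι : UnitAddCircle → ℕ → Fin d)
    (hι : ∀ z : UnitAddCircle, ∀ n : ℕ, ∀ kk : Fin d,
        ι z n = kk ↔ rep (T^[n] z) ∈ Set.Ico (x kk.castSucc) (x kk.succ))
    (I : ℕ → Fin d) (hI : ∀ N : ℕ, ∃ n ≥ N, ((I n : ℕ) ≠ d - 1)) :
    ∃ z : UnitAddCircle, ι z = I := by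
  classical
  set f : ℝ → ℝ := fun r : ℝ => rep (T ((r : ℝ) : UnitAddCircle)) with hfdef
  set J : ℕ → Set ℝ := fun m => Ico (x (I m).castSucc) (x (I m).succ) with hJdef
  have hu0 : ∀ k : Fin d, (0:ℝ) ≤ x k.castSucc := fun k => by
    rw [← hx0]; exact hxmono.monotone (Fin.zero_le _)
  have huv : ∀ k : Fin d, x k.castSucc < x k.succ := fun k => hxmono Fin.castSucc_lt_succ
  have hv1 : ∀ k : Fin d, x k.succ ≤ 1 := fun k => by
    rw [← hx1]; exact hxmono.monotone (Fin.le_last _)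
  have hvlt : ∀ k : Fin d, (k:ℕ) ≠ d - 1 → x k.succ < 1 := by
    intro k hk
    rw [← hx1]
    apply hxmono
    rw [Fin.lt_def]
    have := k.isLt
    simp only [Fin.val_succ, Fin.val_last]
    omega
  have hfmem : ∀ r : ℝ, f r ∈ Ico (0:ℝ) 1 := fun r => rep_mem _
  have hcirc : ∀ r : ℝ, ((f r : ℝ) : UnitAddCircle) = T ((r:ℝ):UnitAddCircle) :=
    fun r => coe_rep _
  have hfmono : ∀ k : Fin d, MonotoneOn f (Ico (x k.castSucc) (x k.succ)) :=
    fun k r hr s hs hrs => hTmono k r s hr hs hrs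
  have hfcont : ∀ k : Fin d, ContinuousOn f (Ico (x k.castSucc) (x k.succ)) :=
    fun k => contF hT hcirc hfmem (hfmono k)
  have hf0 : ∀ k : Fin d, f (x k.castSucc) = 0 := by
    intro k; show rep _ = 0; rw [hT0 k, rep_zero]
  have hf1 : ∀ k : Fin d, Tendsto f (nhdsWithin (x k.succ) (Iio (x k.succ))) (nhds 1) := hT1
  have hstep : ∀ n a b, CylInv J f n a b → ∃ p : ℝ × ℝ,
      (CylInv J f (n+1) p.1 p.2 ∧ a ≤ p.1 ∧ p.1 < p.2 ∧ p.2 ≤ b) ∧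
      ((I n : ℕ) ≠ d - 1 → p.2 < b) := by
    intro n a b h
    obtain ⟨p, hp1, hp2⟩ := step_lemma hfmem (hfmono (I n)) (hfcont (I n)) (hf0 (I n))
      (hf1 (I n)) (hu0 (I n)) (huv (I n)) (hv1 (I n)) (by rw [hJdef]) h
    exact ⟨p, hp1, fun hne => hp2 (hvlt (I n) hne)⟩
  have hbase : CylInv J f 0 0 1 := by
    refine ⟨le_refl 0, zero_lt_one, le_refl 1, ?_, ?_, ?_, ?_, ?_, ?_⟩
    · simp only [Function.iterate_zero]; exact monotone_id.monotoneOn _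
    · intro r hr; simpa using hr
    · simp
    · simp only [Function.iterate_zero]; exact continuousOn_id
    · simp only [Function.iterate_zero]; exact tendsto_id.mono_right nhdsWithin_le_nhds
    · intro r _ m hm; exact absurd hm (Nat.not_lt_zero m)
  let Fst : ℕ → ℝ × ℝ → ℝ × ℝ := fun n p =>
    if h : CylInv J f n p.1 p.2 then (hstep n p.1 p.2 h).choose else p
  let c : ℕ → ℝ × ℝ := fun n => Nat.rec ((0:ℝ), (1:ℝ)) (fun m q => Fst m q) n
  have hc0 : c 0 = ((0:ℝ), (1:ℝ)) := rfl
  have hcs : ∀ n, c (n+1) = Fst n (c n) := fun n => rfl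
  have hInv : ∀ n, CylInv J f n (c n).1 (c n).2 := by
    intro n
    induction n with
    | zero => rw [hc0]; exact hbase
    | succ n ih =>
      rw [hcs n]
      show CylInv J f (n+1) (Fst n (c n)).1 (Fst n (c n)).2
      unfold Fst
      beta_reduce
      rw [dif_pos ih]
      exact (hstep n (c n).1 (c n).2 ih).choose_spec.1.1
  have hrel : ∀ n, (c n).1 ≤ (c (n+1)).1 ∧ (c (n+1)).1 < (c (n+1)).2 ∧
      (c (n+1)).2 ≤ (c n).2 ∧ ((I n : ℕ) ≠ d - 1 → (c (n+1)).2 < (c n).2) := by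
    intro n
    have ih := hInv n
    have hspec := (hstep n (c n).1 (c n).2 ih).choose_spec
    have he : c (n+1) = (hstep n (c n).1 (c n).2 ih).choose := by
      rw [hcs n]
      show Fst n (c n) = _
      unfold Fst
      beta_reduce
      rw [dif_pos ih]
    rw [he]
    exact ⟨hspec.1.2.1, hspec.1.2.2.1, hspec.1.2.2.2, hspec.2⟩
  have hamono : Monotone fun n => (c n).1 := monotone_nat_of_le_succ fun n => (hrel n).1
  have hbanti : Antitone fun n => (c n).2 := antitone_nat_of_succ_le fun n => (hrel n).2.2.1
  have habn : ∀ n, (c n).1 < (c n).2 := fun n => (hInv n).2.1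
  have hcross : ∀ m n, (c m).1 ≤ (c n).2 := by
    intro m n
    rcases le_total m n with h | h
    · exact le_trans (hamono h) (habn n).le
    · exact le_trans (habn m).le (hbanti h)
  have hbdd : BddAbove (Set.range fun n => (c n).1) := by
    refine ⟨1, ?_⟩
    rintro y ⟨n, rfl⟩
    exact le_trans (habn n).le (hInv n).2.2.1
  set A := ⨆ n, (c n).1 with hA
  have hAub : ∀ n, (c n).1 ≤ A := fun n => le_ciSup hbdd n
  have hAle : ∀ n, A ≤ (c n).2 := fun n => ciSup_le fun m => hcross m n
  have hAlt : ∀ n, A < (c n).2 := by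
    intro n
    rcases lt_or_eq_of_le (hAle n) with h | h
    · exact h
    · exfalso
      obtain ⟨m, hmn, hIm⟩ := hI n
      have h1 : (c (m+1)).2 < (c m).2 := (hrel m).2.2.2 hIm
      have h2 : (c m).2 ≤ (c n).2 := hbanti hmn
      have h3 : A ≤ (c (m+1)).2 := hAle (m+1)
      linarith [h.ge]
  have hAmem : ∀ n, A ∈ Ico (c n).1 (c n).2 := fun n => ⟨hAub n, hAlt n⟩
  have hA01 : A ∈ Ico (0:ℝ) 1 := by
    have h := hAmem 0
    rwa [hc0] at h
  refine ⟨((A:ℝ) : UnitAddCircle), ?_⟩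
  funext n
  apply (hι _ n (I n)).mpr
  rw [iter_eq T n hA01]
  have h5 := (hInv (n+1)).2.2.2.2.2.2.2.2 A (hAmem (n+1)) n (Nat.lt_succ_self n)
  rw [hJdef] at h5
  exact h5
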